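/- Let A₁, ..., Aₘ and B be n×n real symmetric matrices of the form Aᵢ = [[Aᵢ¹, Aᵢ²],[(Aᵢ²)ᵀ, Aᵢ³]] and B = diag(I_p, 0_{n−p}), where each Aᵢ¹ is p×p (p < n), each Aᵢ³ is diagonal, and A₁³ is nonsingular. Then A₁, ..., Aₘ, B are simultaneously diagonalizable via congruence if and only if (1) Aᵢ² = A₁²(A₁³)⁻¹Aᵢ³ for i = 2, ..., m, and (2) the matrices Aᵢ¹ − Aᵢ²(A₁³)⁻¹(A₁²)ᵀ, i = 1, ..., m, pairwise commute. -/

import Mathlib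

open Matrix Module.End

section helpers

variable {n : Type*} [Fintype n] [DecidableEq n]

lemma diag_mul_comm' {X Y : Matrix n n ℝ} (hX : X.IsDiag) (hY : Y.IsDiag) :
    X * Y = Y * X := by
  rw [← hX.diagonal_diag, ← hY.diagonal_diag, diagonal_mul_diagonal, diagonal_mul_diagonal]
  refine congrArg Matrix.diagonal ?_
  funext k
  ring

lemma diag3_swap {X Y F : Matrix n n ℝ} (hX : X.IsDiag) (hY : Y.IsDiag) (hF : F.IsDiag) :
    X * F * Y = Y * F * X := by
  rw [← hX.diagonal_diag, ← hY.diagonal_diag, ← hF.diagonal_diag, diagonal_mul_diagonal,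
    diagonal_mul_diagonal, diagonal_mul_diagonal, diagonal_mul_diagonal]
  refine congrArg Matrix.diagonal ?_
  funext k
  ring

lemma sandwich {P Q : Matrix n n ℝ} (hQP : Q * P = 1) (hPQ : Pᵀ * Qᵀ = 1)
    (X F Y : Matrix n n ℝ) :
    (Qᵀ * X * Q) * (P * F * Pᵀ) * (Qᵀ * Y * Q) = Qᵀ * (X * F * Y) * Q := by
  have e1 : ∀ W : Matrix n n ℝ, Q * (P * W) = W := fun W => by
    rw [← Matrix.mul_assoc, hQP, Matrix.one_mul]
  have e2 : ∀ W : Matrix n n ℝ, Pᵀ * (Qᵀ * W) = W := fun W => by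
    rw [← Matrix.mul_assoc, hPQ, Matrix.one_mul]
  simp only [Matrix.mul_assoc]
  rw [e1, e2]

lemma sandwich2 {P Q : Matrix n n ℝ} (hQP : Q * P = 1) (hPQ : Pᵀ * Qᵀ = 1)
    (X F Y : Matrix n n ℝ) :
    (P * X * Pᵀ) * (Qᵀ * F * Q) * (P * Y * Pᵀ) = P * (X * F * Y) * Pᵀ := by
  have e1 : ∀ W : Matrix n n ℝ, Pᵀ * (Qᵀ * W) = W := fun W => by
    rw [← Matrix.mul_assoc, hPQ, Matrix.one_mul]
  have e2 : ∀ W : Matrix n n ℝ, Q * (P * W) = W := fun W => by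
    rw [← Matrix.mul_assoc, hQP, Matrix.one_mul]
  simp only [Matrix.mul_assoc]
  rw [e1, e2]

lemma pseudo_EFE {E : Matrix n n ℝ} (hE : E.IsDiag) :
    E * diagonal (fun k => (E.diag k)⁻¹) * E = E := by
  have h := hE.diagonal_diag
  set d := E.diag with hd
  rw [← h, diagonal_mul_diagonal, diagonal_mul_diagonal]
  refine congrArg Matrix.diagonal ?_
  funext k
  rcases eq_or_ne (d k) 0 with h | h
  · simp [h]
  · field_simp

lemma pseudo_FEF {E : Matrix n n ℝ} (hE : E.IsDiag) :
    diagonal (fun k => (E.diag k)⁻¹) * E * diagonal (fun k => (E.diag k)⁻¹) =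
      diagonal (fun k => (E.diag k)⁻¹) := by
  have h := hE.diagonal_diag
  set d := E.diag with hd
  rw [← h, diagonal_mul_diagonal, diagonal_mul_diagonal]
  refine congrArg Matrix.diagonal ?_
  funext k
  rcases eq_or_ne (d k) 0 with h | h
  · simp [h]
  · field_simp

end helpers

lemma simul_diag {q : ℕ} {ι : Type*} (M : ι → Matrix (Fin q) (Fin q) ℝ)
    (hsym : ∀ i, (M i).IsSymm) (hcomm : Pairwise (fun i j => M i * M j = M j * M i)) :
    ∃ Q : Matrix (Fin q) (Fin q) ℝ, Qᵀ * Q = 1 ∧ ∀ i, (Qᵀ * M i * Q).IsDiag := by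
  classical
  set T : ι → (EuclideanSpace ℝ (Fin q) →ₗ[ℝ] EuclideanSpace ℝ (Fin q)) :=
    fun i => (M i).toEuclideanLin with hT
  have hTsym : ∀ i, (T i).IsSymmetric := by
    intro i
    rw [← Matrix.isHermitian_iff_isSymmetric]
    rw [Matrix.IsHermitian, Matrix.conjTranspose_eq_transpose_of_trivial]
    exact hsym i
  have hmul : ∀ a b : ι, T a * T b = Matrix.toEuclideanLin (M a * M b) := by
    intro a b
    ext x : 1
    rw [Module.End.mul_apply]
    show Matrix.toEuclideanLin (M a) (Matrix.toEuclideanLin (M b) x) = _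
    rw [Matrix.toEuclideanLin_apply, Matrix.toEuclideanLin_apply,
      Matrix.toEuclideanLin_apply, WithLp.ofLp_toLp, Matrix.mulVec_mulVec]
  have hTcomm : Pairwise (Function.onFun Commute T) := by
    intro i j hij
    show T i * T j = T j * T i
    rw [hmul, hmul, hcomm hij]
  set V : (ι → ℝ) → Submodule ℝ (EuclideanSpace ℝ (Fin q)) :=
    fun χ => ⨅ i, eigenspace (T i) (χ i) with hV
  have internal : DirectSum.IsInternal V :=
    LinearMap.IsSymmetric.LinearMap.IsSymmetric.directSum_isInternal_of_pairwise_commute hTsym hTcomm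
  have hInd : iSupIndep V := internal.submodule_iSupIndep
  have : Fintype {χ : ι → ℝ // V χ ≠ ⊥} := hInd.fintypeNeBotOfFiniteDimensional
  have internal' : DirectSum.IsInternal (fun c : {χ : ι → ℝ // V χ ≠ ⊥} => V c.1) := by
    rw [DirectSum.isInternal_submodule_iff_iSupIndep_and_iSup_eq_top]
    refine ⟨hInd.comp Subtype.val_injective, ?_⟩
    rw [iSup_ne_bot_subtype]
    exact ((DirectSum.isInternal_submodule_iff_iSupIndep_and_iSup_eq_top V).mp internal).2
  have ofam' : OrthogonalFamily ℝ (fun c : {χ : ι → ℝ // V χ ≠ ⊥} => (V c.1 : Submodule ℝ _))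
      (fun c => (V c.1).subtypeₗᵢ) :=
    (LinearMap.IsSymmetric.orthogonalFamily_iInf_eigenspaces hTsym).comp Subtype.val_injective
  have hfr : Module.finrank ℝ (EuclideanSpace ℝ (Fin q)) = q := finrank_euclideanSpace_fin
  set b : OrthonormalBasis (Fin q) ℝ (EuclideanSpace ℝ (Fin q)) :=
    internal'.subordinateOrthonormalBasis hfr ofam' with hbdef
  set χ : Fin q → {χ : ι → ℝ // V χ ≠ ⊥} :=
    fun a => internal'.subordinateOrthonormalBasisIndex hfr a ofam' with hχ
  have hb : ∀ (a : Fin q) (i : ι), T i (b a) = (χ a).1 i • b a := by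
    intro a i
    have h1 := internal'.subordinateOrthonormalBasis_subordinate hfr a ofam'
    have h2 := (Submodule.mem_iInf _).mp h1 i
    exact mem_eigenspace_iff.mp h2
  have horth : ∀ j k : Fin q, (inner ℝ (b j) (b k) : ℝ) = if j = k then 1 else 0 :=
    fun j k => orthonormal_iff_ite.mp b.orthonormal j k
  have hinner : ∀ x y : EuclideanSpace ℝ (Fin q), (inner ℝ x y : ℝ) = ∑ l, x l * y l := by
    intro x y
    simp [PiLp.inner_apply, RCLike.inner_apply, starRingEnd_apply, mul_comm]
  set Q : Matrix (Fin q) (Fin q) ℝ := Matrix.of fun k j => b j k with hQ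
  refine ⟨Q, ?_, ?_⟩
  · ext j k
    have : (Qᵀ * Q) j k = ∑ l, b j l * b k l := by
      simp [Matrix.mul_apply, hQ]
    rw [this, ← hinner, horth, Matrix.one_apply]
  · intro i j k hjk
    have hMQ : ∀ l : Fin q, (M i * Q) l k = (χ k).1 i * b k l := by
      intro l
      have h1 : (M i * Q) l k = (T i (b k)) l := by
        show _ = ((M i) *ᵥ (fun r => b k r)) l
        simp [Matrix.mul_apply, Matrix.mulVec, dotProduct, hQ]
      rw [h1, hb k i]
      rfl
    have : (Qᵀ * M i * Q) j k = (χ k).1 i * ∑ l, b j l * b k l := by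
      rw [Matrix.mul_assoc]
      simp only [Matrix.mul_apply, Matrix.transpose_apply, hMQ]
      rw [Finset.mul_sum]
      congr 1; ext l
      simp [hQ]; ring
    rw [this, ← hinner, horth, if_neg hjk, mul_zero]

theorem stmt_12 (p s m : ℕ) (hs : 0 < s)
    (A1 : Fin (m + 1) → Matrix (Fin p) (Fin p) ℝ)
    (A2 : Fin (m + 1) → Matrix (Fin p) (Fin s) ℝ)
    (A3 : Fin (m + 1) → Matrix (Fin s) (Fin s) ℝ)
    (hA1 : ∀ i, (A1 i).IsSymm)
    (hA3d : ∀ i, (A3 i).IsDiag) (hA3 : IsUnit (A3 0))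
    (A : Fin (m + 1) → Matrix (Fin p ⊕ Fin s) (Fin p ⊕ Fin s) ℝ)
    (hA : ∀ i, A i = fromBlocks (A1 i) (A2 i) (A2 i)ᵀ (A3 i))
    (B : Matrix (Fin p ⊕ Fin s) (Fin p ⊕ Fin s) ℝ)
    (hB : B = fromBlocks 1 0 0 0) :
    (∃ P : Matrix (Fin p ⊕ Fin s) (Fin p ⊕ Fin s) ℝ, IsUnit P ∧
        (∀ i, (Pᵀ * A i * P).IsDiag) ∧ (Pᵀ * B * P).IsDiag) ↔
      ((∀ i : Fin (m + 1), i ≠ 0 → A2 i = A2 0 * (A3 0)⁻¹ * A3 i) ∧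
        (∀ i j : Fin (m + 1),
          (A1 i - A2 i * (A3 0)⁻¹ * (A2 0)ᵀ) * (A1 j - A2 j * (A3 0)⁻¹ * (A2 0)ᵀ) =
          (A1 j - A2 j * (A3 0)⁻¹ * (A2 0)ᵀ) * (A1 i - A2 i * (A3 0)⁻¹ * (A2 0)ᵀ))) := by
  have hdet3 : IsUnit (A3 0).det := (Matrix.isUnit_iff_isUnit_det _).mp hA3
  have hinv1 : A3 0 * (A3 0)⁻¹ = 1 := Matrix.mul_nonsing_inv _ hdet3
  have hinv2 : (A3 0)⁻¹ * A3 0 = 1 := Matrix.nonsing_inv_mul _ hdet3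
  have h3symm : ∀ i, (A3 i)ᵀ = A3 i := by
    intro i
    ext a b
    rcases eq_or_ne a b with rfl | hne
    · rfl
    · rw [Matrix.transpose_apply, (hA3d i) (Ne.symm hne), (hA3d i) hne]
  have hinvT : ((A3 0)⁻¹)ᵀ = (A3 0)⁻¹ := by
    rw [Matrix.transpose_nonsing_inv, h3symm 0]
  constructor
  · -- Forward direction
    rintro ⟨P, hPu, hDdiag, hEdiag⟩
    have hPdet : IsUnit P.det := (Matrix.isUnit_iff_isUnit_det _).mp hPu
    set Q := P⁻¹ with hQdef
    have hQP : Q * P = 1 := Matrix.nonsing_inv_mul _ hPdet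
    have hPQ : P * Q = 1 := Matrix.mul_nonsing_inv _ hPdet
    have hPQt : Pᵀ * Qᵀ = 1 := by rw [← Matrix.transpose_mul, hQP, Matrix.transpose_one]
    have hQPt : Qᵀ * Pᵀ = 1 := by rw [← Matrix.transpose_mul, hPQ, Matrix.transpose_one]
    have cancel : ∀ W : Matrix (Fin p ⊕ Fin s) (Fin p ⊕ Fin s) ℝ,
        Qᵀ * (Pᵀ * W * P) * Q = W := by
      intro W
      calc Qᵀ * (Pᵀ * W * P) * Q = (Qᵀ * Pᵀ) * (W * (P * Q)) := by
            simp only [Matrix.mul_assoc]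
        _ = W := by rw [hQPt, hPQ, Matrix.one_mul, Matrix.mul_one]
    set G := P * diagonal (fun k => ((Pᵀ * B * P).diag k)⁻¹) * Pᵀ with hG
    have hGsym : Gᵀ = G := by
      rw [hG, Matrix.transpose_mul, Matrix.transpose_mul, Matrix.transpose_transpose,
        Matrix.diagonal_transpose, ← Matrix.mul_assoc]
    have hBGB : B * G * B = B := by
      have h := sandwich hQP hPQt (Pᵀ * B * P) (diagonal (fun k => ((Pᵀ * B * P).diag k)⁻¹))
        (Pᵀ * B * P)
      rw [← hG, pseudo_EFE hEdiag, cancel B] at h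
      exact h
    have hGBG : G * B * G = G := by
      have h := sandwich2 hQP hPQt (diagonal (fun k => ((Pᵀ * B * P).diag k)⁻¹)) (Pᵀ * B * P)
        (diagonal (fun k => ((Pᵀ * B * P).diag k)⁻¹))
      rw [← hG, pseudo_FEF hEdiag, cancel B, ← hG] at h
      exact h
    have hBGA : ∀ i, B * G * A i = A i * G * B := by
      intro i
      have h1 := sandwich hQP hPQt (Pᵀ * B * P) (diagonal (fun k => ((Pᵀ * B * P).diag k)⁻¹))
        (Pᵀ * A i * P)
      have h2 := sandwich hQP hPQt (Pᵀ * A i * P) (diagonal (fun k => ((Pᵀ * B * P).diag k)⁻¹))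
        (Pᵀ * B * P)
      rw [← hG, cancel B, cancel (A i)] at h1
      rw [← hG, cancel B, cancel (A i)] at h2
      rw [h1, h2, diag3_swap hEdiag (hDdiag i) (Matrix.isDiag_diagonal _)]
    have hAGA : ∀ i j, A i * G * A j = A j * G * A i := by
      intro i j
      have h1 := sandwich hQP hPQt (Pᵀ * A i * P) (diagonal (fun k => ((Pᵀ * B * P).diag k)⁻¹))
        (Pᵀ * A j * P)
      have h2 := sandwich hQP hPQt (Pᵀ * A j * P) (diagonal (fun k => ((Pᵀ * B * P).diag k)⁻¹))
        (Pᵀ * A i * P)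
      rw [← hG, cancel (A i), cancel (A j)] at h1
      rw [← hG, cancel (A i), cancel (A j)] at h2
      rw [h1, h2, diag3_swap (hDdiag i) (hDdiag j) (Matrix.isDiag_diagonal _)]
    -- block decomposition of G
    set G1 := G.toBlocks₁₁ with hG1def
    set g := G.toBlocks₁₂ with hgdef
    set gp := G.toBlocks₂₁ with hgpdef
    set G4 := G.toBlocks₂₂ with hG4def
    have hGb : G = fromBlocks G1 g gp G4 := by
      rw [hG1def, hgdef, hgpdef, hG4def, Matrix.fromBlocks_toBlocks]
    have h11 : G1 = 1 := by
      have hh := hBGB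
      rw [hB, hGb, Matrix.fromBlocks_multiply, Matrix.fromBlocks_multiply] at hh
      simp only [Matrix.zero_mul, Matrix.mul_zero, Matrix.one_mul, Matrix.mul_one, add_zero,
        zero_add] at hh
      exact (Matrix.fromBlocks_inj.mp hh).1
    have hgp : gp = gᵀ := by
      have hh := hGsym
      rw [hGb, Matrix.fromBlocks_transpose] at hh
      exact ((Matrix.fromBlocks_inj.mp hh).2.2.1).symm
    have hG4v : G4 = gᵀ * g := by
      have hh := hGBG
      rw [hB, hGb, h11, hgp, Matrix.fromBlocks_multiply, Matrix.fromBlocks_multiply] at hh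
      simp only [Matrix.zero_mul, Matrix.mul_zero, Matrix.one_mul, Matrix.mul_one, add_zero,
        zero_add] at hh
      exact ((Matrix.fromBlocks_inj.mp hh).2.2.2).symm
    have hA2g : ∀ i, A2 i = -(g * A3 i) := by
      intro i
      have hh := hBGA i
      rw [hB, hGb, hA i, h11, hgp, Matrix.fromBlocks_multiply, Matrix.fromBlocks_multiply,
        Matrix.fromBlocks_multiply, Matrix.fromBlocks_multiply] at hh
      simp only [Matrix.zero_mul, Matrix.mul_zero, Matrix.one_mul, Matrix.mul_one, add_zero,
        zero_add] at hh
      have h12 := (Matrix.fromBlocks_inj.mp hh).2.1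
      exact eq_neg_of_add_eq_zero_left h12
    have hgval : g = -(A2 0 * (A3 0)⁻¹) := by
      have h0 : g * A3 0 = -(A2 0) := by rw [hA2g 0, neg_neg]
      calc g = g * (A3 0 * (A3 0)⁻¹) := by rw [hinv1, Matrix.mul_one]
        _ = (g * A3 0) * (A3 0)⁻¹ := by rw [Matrix.mul_assoc]
        _ = (-(A2 0)) * (A3 0)⁻¹ := by rw [h0]
        _ = -(A2 0 * (A3 0)⁻¹) := by rw [Matrix.neg_mul]
    have cond1 : ∀ i : Fin (m + 1), i ≠ 0 → A2 i = A2 0 * (A3 0)⁻¹ * A3 i := by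
      intro i _
      rw [hA2g i, hgval, Matrix.neg_mul, neg_neg]
    refine ⟨cond1, ?_⟩
    have hA2i' : ∀ i, A2 i = A2 0 * (A3 0)⁻¹ * A3 i := by
      intro i
      rcases eq_or_ne i 0 with rfl | hne
      · rw [Matrix.mul_assoc, hinv2, Matrix.mul_one]
      · exact cond1 i hne
    have hA2T' : ∀ i, (A2 i)ᵀ = A3 i * ((A3 0)⁻¹ * (A2 0)ᵀ) := by
      intro i
      rw [hA2i' i, Matrix.transpose_mul, Matrix.transpose_mul, hinvT, h3symm i]
    have hgT : gᵀ = -((A3 0)⁻¹ * (A2 0)ᵀ) := by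
      rw [hgval, Matrix.transpose_neg, Matrix.transpose_mul, hinvT]
    have hMi : ∀ i, A1 i + A2 i * gᵀ = A1 i - A2 i * (A3 0)⁻¹ * (A2 0)ᵀ := by
      intro i
      rw [hgT, Matrix.mul_neg, ← sub_eq_add_neg, ← Matrix.mul_assoc]
    have hMj : ∀ j, A1 j + g * (A2 j)ᵀ = A1 j - A2 j * (A3 0)⁻¹ * (A2 0)ᵀ := by
      intro j
      rw [hA2T' j, hgval, Matrix.neg_mul, ← sub_eq_add_neg]
      congr 1
      rw [hA2i' j]
      simp only [Matrix.mul_assoc]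
    have transform : ∀ a b, (A1 a + A2 a * gᵀ) * A1 b + (A1 a * g + A2 a * (gᵀ * g)) * (A2 b)ᵀ
        = (A1 a - A2 a * (A3 0)⁻¹ * (A2 0)ᵀ) * (A1 b - A2 b * (A3 0)⁻¹ * (A2 0)ᵀ) := by
      intro a b
      have e1 : A1 a * g + A2 a * (gᵀ * g) = (A1 a + A2 a * gᵀ) * g := by
        rw [Matrix.add_mul, ← Matrix.mul_assoc]
      rw [e1, Matrix.mul_assoc, ← Matrix.mul_add, hMi a, hMj b]
    intro i j
    have hh := hAGA i j
    rw [hA i, hA j, hGb, h11, hgp, hG4v, Matrix.fromBlocks_multiply, Matrix.fromBlocks_multiply,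
      Matrix.fromBlocks_multiply, Matrix.fromBlocks_multiply] at hh
    simp only [Matrix.mul_one, Matrix.one_mul] at hh
    have h11b := (Matrix.fromBlocks_inj.mp hh).1
    rw [transform i j, transform j i] at h11b
    exact h11b
  · -- Backward direction
    rintro ⟨h1, h2⟩
    have hA2' : ∀ i, A2 i = A2 0 * (A3 0)⁻¹ * A3 i := by
      intro i
      rcases eq_or_ne i 0 with rfl | hne
      · rw [Matrix.mul_assoc, hinv2, Matrix.mul_one]
      · exact h1 i hne
    have hA2T : ∀ i, (A2 i)ᵀ = A3 i * ((A3 0)⁻¹ * (A2 0)ᵀ) := by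
      intro i
      rw [hA2' i, Matrix.transpose_mul, Matrix.transpose_mul, hinvT, h3symm i]
    have hcross : ∀ i, A2 0 * (A3 0)⁻¹ * (A2 i)ᵀ = A2 i * ((A3 0)⁻¹ * (A2 0)ᵀ) := by
      intro i
      rw [Matrix.mul_assoc, hA2T i, hA2' i]
      simp only [Matrix.mul_assoc]
    have hMsym : ∀ i, (A1 i - A2 i * (A3 0)⁻¹ * (A2 0)ᵀ).IsSymm := by
      intro i
      show _ᵀ = _
      rw [Matrix.transpose_sub, (hA1 i), Matrix.transpose_mul, Matrix.transpose_mul,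
        Matrix.transpose_transpose, hinvT]
      congr 1
      rw [← Matrix.mul_assoc, hcross i, ← Matrix.mul_assoc]
    obtain ⟨Q, hQ1, hQd⟩ := simul_diag (fun i => A1 i - A2 i * (A3 0)⁻¹ * (A2 0)ᵀ) hMsym
      (fun i j _ => h2 i j)
    set X : Matrix (Fin s) (Fin p) ℝ := -((A3 0)⁻¹ * (A2 0)ᵀ) with hX
    have hXT : Xᵀ = -(A2 0 * (A3 0)⁻¹) := by
      rw [hX, Matrix.transpose_neg, Matrix.transpose_mul, hinvT, Matrix.transpose_transpose]
    have hz2 : ∀ i, A2 i + Xᵀ * A3 i = 0 := by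
      intro i
      rw [hXT, Matrix.neg_mul, hA2' i]
      simp
    have hz1 : ∀ i, (A2 i)ᵀ + A3 i * X = 0 := by
      intro i
      rw [hX, Matrix.mul_neg, hA2T i]
      simp
    have hm : ∀ i, A1 i + Xᵀ * (A2 i)ᵀ = A1 i - A2 i * (A3 0)⁻¹ * (A2 0)ᵀ := by
      intro i
      rw [hXT, Matrix.neg_mul, hcross i, ← Matrix.mul_assoc, ← sub_eq_add_neg]
    refine ⟨fromBlocks Q 0 (X * Q) 1, ?_, ?_, ?_⟩
    · have hdetQ : IsUnit Q.det := by
        have hh := congrArg Matrix.det hQ1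
        rw [Matrix.det_mul, Matrix.det_transpose, Matrix.det_one] at hh
        exact IsUnit.of_mul_eq_one _ hh
      refine (Matrix.isUnit_iff_isUnit_det _).mpr ?_
      rw [Matrix.det_fromBlocks_zero₁₂, Matrix.det_one, mul_one]
      exact hdetQ
    · intro i
      have key : (fromBlocks Q 0 (X * Q) 1)ᵀ * A i * (fromBlocks Q 0 (X * Q) 1)
          = fromBlocks (Qᵀ * (A1 i - A2 i * (A3 0)⁻¹ * (A2 0)ᵀ) * Q) 0 0 (A3 i) := by
        rw [hA i, Matrix.fromBlocks_transpose, Matrix.fromBlocks_multiply,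
          Matrix.fromBlocks_multiply]
        simp only [Matrix.transpose_zero, Matrix.transpose_one, Matrix.zero_mul, Matrix.mul_zero,
          Matrix.one_mul, Matrix.mul_one, add_zero, zero_add]
        refine Matrix.fromBlocks_inj.mpr ⟨?_, ?_, ?_, rfl⟩
        · simp only [Matrix.transpose_mul]
          rw [show Qᵀ * A1 i + Qᵀ * Xᵀ * (A2 i)ᵀ = Qᵀ * (A1 i + Xᵀ * (A2 i)ᵀ) by
            rw [Matrix.mul_add, Matrix.mul_assoc]]
          rw [show Qᵀ * A2 i + Qᵀ * Xᵀ * A3 i = Qᵀ * (A2 i + Xᵀ * A3 i) by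
            rw [Matrix.mul_add, Matrix.mul_assoc]]
          rw [hz2 i, Matrix.mul_zero, Matrix.zero_mul, add_zero, hm i]
        · simp only [Matrix.transpose_mul]
          rw [show Qᵀ * A2 i + Qᵀ * Xᵀ * A3 i = Qᵀ * (A2 i + Xᵀ * A3 i) by
            rw [Matrix.mul_add, Matrix.mul_assoc]]
          rw [hz2 i, Matrix.mul_zero]
        · rw [← Matrix.mul_assoc, ← Matrix.add_mul, hz1 i, Matrix.zero_mul]
      rw [key]
      exact Matrix.IsDiag.fromBlocks (by simpa using hQd i) (hA3d i)
    · have keyB : (fromBlocks Q 0 (X * Q) (1 : Matrix (Fin s) (Fin s) ℝ))ᵀ * B *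
          (fromBlocks Q 0 (X * Q) 1)
          = fromBlocks (1 : Matrix (Fin p) (Fin p) ℝ) 0 0 (0 : Matrix (Fin s) (Fin s) ℝ) := by
        rw [hB, Matrix.fromBlocks_transpose, Matrix.fromBlocks_multiply,
          Matrix.fromBlocks_multiply]
        simp only [Matrix.transpose_zero, Matrix.transpose_one, Matrix.zero_mul, Matrix.mul_zero,
          Matrix.one_mul, Matrix.mul_one, add_zero, zero_add]
        rw [hQ1]
      rw [keyB]
      exact Matrix.IsDiag.fromBlocks Matrix.isDiag_one Matrix.isDiag_zero
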